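/- For all complex numbers m and all complex colour parameters λ, μ, ν, the coloured Jordanian R-matrices R_m^{λ,μ} satisfy the coloured quantum Yang–Baxter equation R₁₂^{λ,μ} * R₁₃^{λ,ν} * R₂₃^{μ,ν} = R₂₃^{μ,ν} * R₁₃^{λ,ν} * R₁₂^{λ,μ}. -/
import Mathlib


noncomputable section

open Matrix

/-- The coloured Jordanian `R`-matrix `R_m^{λ,μ}`, indexed by `Fin 2 × Fin 2`
(indices `0,1` correspond to the paper's `1,2`). -/
def RcolJ (m l μ : ℂ) : Matrix (Fin 2 × Fin 2) (Fin 2 × Fin 2) ℂ :=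
  fun p q =>
    if p = q then 1
    else if p = (0, 0) ∧ q = (0, 1) then -(m * (1 - 2 * l))
    else if p = (0, 0) ∧ q = (1, 0) then m * (1 - 2 * μ)
    else if p = (0, 0) ∧ q = (1, 1) then m ^ 2 * (1 - 4 * l * μ)
    else if p = (0, 1) ∧ q = (1, 1) then -(m * (1 + 2 * μ))
    else if p = (1, 0) ∧ q = (1, 1) then m * (1 + 2 * l)
    else 0

/-- Leg embedding `R₁₂` acting on the first two tensor factors. -/
def leg12 {n : ℕ} (R : Matrix (Fin n × Fin n) (Fin n × Fin n) ℂ) :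
    Matrix (Fin n × Fin n × Fin n) (Fin n × Fin n × Fin n) ℂ :=
  fun p q => if p.2.2 = q.2.2 then R (p.1, p.2.1) (q.1, q.2.1) else 0

/-- Leg embedding `R₁₃` acting on the first and third tensor factors. -/
def leg13 {n : ℕ} (R : Matrix (Fin n × Fin n) (Fin n × Fin n) ℂ) :
    Matrix (Fin n × Fin n × Fin n) (Fin n × Fin n × Fin n) ℂ :=
  fun p q => if p.2.1 = q.2.1 then R (p.1, p.2.2) (q.1, q.2.2) else 0

/-- Leg embedding `R₂₃` acting on the last two tensor factors. -/
def leg23 {n : ℕ} (R : Matrix (Fin n × Fin n) (Fin n × Fin n) ℂ) :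
    Matrix (Fin n × Fin n × Fin n) (Fin n × Fin n × Fin n) ℂ :=
  fun p q => if p.1 = q.1 then R (p.2.1, p.2.2) (q.2.1, q.2.2) else 0

set_option maxHeartbeats 4000000 in
/-- for all complex `m` and colours `λ, μ, ν`, the coloured Jordanian
`R`-matrices `R_m^{λ,μ}` satisfy the coloured quantum Yang–Baxter equation. -/
theorem RcolJ_CQYBE (m l μ ν : ℂ) :
    leg12 (RcolJ m l μ) * leg13 (RcolJ m l ν) * leg23 (RcolJ m μ ν) =
      leg23 (RcolJ m μ ν) * leg13 (RcolJ m l ν) * leg12 (RcolJ m l μ) := by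
  ext ⟨a, b, c⟩ ⟨d, e, f⟩
  fin_cases a <;> fin_cases b <;> fin_cases c <;> fin_cases d <;> fin_cases e <;> fin_cases f <;>
  · simp (config := { decide := true }) only [Matrix.mul_apply, Fintype.sum_prod_type,
      Fin.sum_univ_two, leg12, leg13, leg23, RcolJ, if_true, if_false, mul_zero, zero_mul,
      mul_one, one_mul, add_zero, zero_add]
    try ring
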